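/- Let K be a relatively closed subset of an open set B ⊆ ℝⁿ, and let V : K → (lines through the origin in ℝⁿ) be continuous. Suppose that whenever sequences pᵢ, qᵢ ∈ K with pᵢ ≠ qᵢ both converge to a point p ∈ K, the secant lines through pᵢ and qᵢ converge to V(p). Then for every p ∈ K there is a neighborhood W of p and a C¹ function f : V(p) → V(p)^⊥ such that K ∩ W is contained in the graph Γ of f, and at each point q ∈ K ∩ W the line V(q) is tangent to Γ at q. -/

import Mathlib

open Filter Metric Module Set
open scoped Topology RealInnerProductSpace

noncomputable def projOp {E : Type*} [NormedAddCommGroup E] [InnerProductSpace ℝ E]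
    [FiniteDimensional ℝ E] (L : Submodule ℝ E) : E →L[ℝ] E :=
  L.subtypeL.comp (Submodule.orthogonalProjectionOnto L)

set_option linter.unusedSectionVars false

open Filter Metric Module Set intervalIntegral


open scoped Topology
set_option maxHeartbeats 1000000

namespace Whitney1D

variable {F : Type*} [NormedAddCommGroup F] [NormedSpace ℝ F] [CompleteSpace F]

noncomputable def lpt (S : Set ℝ) (x : ℝ) : ℝ := sSup (insert (sInf S) (S ∩ Iic x))
noncomputable def rpt (S : Set ℝ) (x : ℝ) : ℝ := sInf (insert (sSup S) (S ∩ Ici x))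

noncomputable def gapf (g m : ℝ → F) (l r x : ℝ) : F :=
  m l + ((x - l) / (r - l)) • (m r - m l) +
    (6 * ((x - l) / (r - l)) * (1 - (x - l) / (r - l)) / (r - l)) •
      (g r - g l - ((r - l) / 2) • (m l + m r))

open Classical in
noncomputable def psi (S : Set ℝ) (g m : ℝ → F) (x : ℝ) : F :=
  if x ∈ S then m x else gapf g m (lpt S x) (rpt S x) x

variable {S : Set ℝ} (hS : IsCompact S) (hne : S.Nonempty)

section lptrpt
include hS hne

lemma lpt_mem (x : ℝ) : lpt S x ∈ S := by
  have hT : insert (sInf S) (S ∩ Iic x) ⊆ S :=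
    insert_subset (hS.sInf_mem hne) inter_subset_left
  have hcl : IsClosed (insert (sInf S) (S ∩ Iic x)) := by
    rw [insert_eq]
    exact isClosed_singleton.union (hS.isClosed.inter isClosed_Iic)
  exact hT (hcl.csSup_mem (insert_nonempty _ _) ((hS.bddAbove).mono hT))

lemma rpt_mem (x : ℝ) : rpt S x ∈ S := by
  have hT : insert (sSup S) (S ∩ Ici x) ⊆ S :=
    insert_subset (hS.sSup_mem hne) inter_subset_left
  have hcl : IsClosed (insert (sSup S) (S ∩ Ici x)) := by
    rw [insert_eq]
    exact isClosed_singleton.union (hS.isClosed.inter isClosed_Ici)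
  exact hT (hcl.csInf_mem (insert_nonempty _ _) ((hS.bddBelow).mono hT))

lemma lpt_le {x : ℝ} (hx : sInf S ≤ x) : lpt S x ≤ x := by
  refine csSup_le (insert_nonempty _ _) ?_
  rintro y (rfl | ⟨-, hy2⟩)
  · exact hx
  · exact hy2

lemma le_rpt {x : ℝ} (hx : x ≤ sSup S) : x ≤ rpt S x := by
  refine le_csInf (insert_nonempty _ _) ?_
  rintro y (rfl | ⟨-, hy2⟩)
  · exact hx
  · exact hy2

lemma le_lpt {s x : ℝ} (hs : s ∈ S) (hsx : s ≤ x) : s ≤ lpt S x :=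
  le_csSup ((hS.bddAbove).mono (insert_subset (hS.sInf_mem hne) inter_subset_left))
    (mem_insert_of_mem _ ⟨hs, hsx⟩)

lemma rpt_le {s x : ℝ} (hs : s ∈ S) (hxs : x ≤ s) : rpt S x ≤ s :=
  csInf_le ((hS.bddBelow).mono (insert_subset (hS.sSup_mem hne) inter_subset_left))
    (mem_insert_of_mem _ ⟨hs, hxs⟩)

lemma lpt_self {x : ℝ} (hx : x ∈ S) : lpt S x = x :=
  le_antisymm (lpt_le hS hne (csInf_le hS.bddBelow hx)) (le_lpt hS hne hx le_rfl)

lemma rpt_self {x : ℝ} (hx : x ∈ S) : rpt S x = x :=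
  le_antisymm (rpt_le hS hne hx le_rfl) (le_rpt hS hne (le_csSup hS.bddAbove hx))

lemma gap_empty {x z : ℝ} (hz : z ∈ S) : z ∉ Ioo (lpt S x) (rpt S x) := by
  rintro ⟨h1, h2⟩
  have hxz : x < z := by
    by_contra h
    exact absurd (le_lpt hS hne hz (le_of_not_gt h)) (not_le_of_gt h1)
  have hzx : z < x := by
    by_contra h
    exact absurd (rpt_le hS hne hz (le_of_not_gt h)) (not_le_of_gt h2)
  exact absurd (hxz.trans hzx) (lt_irrefl _)

lemma lpt_of_lt {x : ℝ} (hx : x < sInf S) : lpt S x = sInf S := by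
  have : S ∩ Iic x = ∅ := by
    ext z; simp only [mem_inter_iff, mem_Iic, mem_empty_iff_false, iff_false, not_and]
    intro hz hzx
    exact absurd (le_trans (csInf_le hS.bddBelow hz) hzx) (not_le_of_gt hx)
  rw [lpt, this, LawfulSingleton.insert_empty_eq, csSup_singleton]

lemma rpt_of_lt {x : ℝ} (hx : x < sInf S) : rpt S x = sInf S := by
  have h1 : S ∩ Ici x = S := by
    refine inter_eq_left.mpr fun z hz => le_of_lt (lt_of_lt_of_le hx (csInf_le hS.bddBelow hz))
  rw [rpt, h1, insert_eq_self.mpr (hS.sSup_mem hne)]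

lemma rpt_of_gt {x : ℝ} (hx : sSup S < x) : rpt S x = sSup S := by
  have : S ∩ Ici x = ∅ := by
    ext z; simp only [mem_inter_iff, mem_Ici, mem_empty_iff_false, iff_false, not_and]
    intro hz hxz
    exact absurd (le_trans hxz (le_csSup hS.bddAbove hz)) (not_le_of_gt hx)
  rw [rpt, this, LawfulSingleton.insert_empty_eq, csInf_singleton]

lemma lpt_of_gt {x : ℝ} (hx : sSup S < x) : lpt S x = sSup S := by
  have h1 : S ∩ Iic x = S := by
    refine inter_eq_left.mpr fun z hz => le_of_lt (lt_of_le_of_lt (le_csSup hS.bddAbove hz) hx)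
  rw [lpt, h1, insert_eq_self.mpr (hS.sInf_mem hne)]

lemma lpt_lt {x : ℝ} (hx : x ∉ S) (h1 : sInf S ≤ x) : lpt S x < x :=
  lt_of_le_of_ne (lpt_le hS hne h1) fun h => hx (h ▸ lpt_mem hS hne x)

lemma lt_rpt {x : ℝ} (hx : x ∉ S) (h1 : x ≤ sSup S) : x < rpt S x :=
  lt_of_le_of_ne (le_rpt hS hne h1) fun h => hx (h.symm ▸ rpt_mem hS hne x)

/-- if `(l,r)` is a gap of `S` with endpoints in `S`, points inside have the same `lpt`/`rpt`. -/
lemma lpt_rpt_of_gap {l r y : ℝ} (hl : l ∈ S) (hr : r ∈ S)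
    (hgap : ∀ z ∈ S, z ∉ Ioo l r) (hy : y ∈ Ioo l r) :
    lpt S y = l ∧ rpt S y = r ∧ y ∉ S := by
  have hyS : y ∉ S := fun h => hgap y h hy
  have h1 : l ≤ lpt S y := le_lpt hS hne hl hy.1.le
  have h2 : lpt S y ≤ y := lpt_le hS hne (le_trans (csInf_le hS.bddBelow hl) hy.1.le)
  have h3 : y ≤ rpt S y := le_rpt hS hne (le_trans hy.2.le (le_csSup hS.bddAbove hr))
  have h4 : rpt S y ≤ r := rpt_le hS hne hr hy.2.le
  refine ⟨le_antisymm ?_ h1, le_antisymm h4 ?_, hyS⟩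
  · by_contra h
    exact hgap _ (lpt_mem hS hne y) ⟨lt_of_not_ge fun h' => h (le_antisymm h' h1 ▸ le_rfl), h2.trans_lt hy.2⟩
  · by_contra h
    exact hgap _ (rpt_mem hS hne y) ⟨hy.1.trans_le h3, lt_of_not_ge h⟩

end lptrpt


variable (g m : ℝ → F)

lemma gapf_left (l r : ℝ) : gapf g m l r l = m l := by simp [gapf]

lemma gapf_self (l x : ℝ) : gapf g m l l x = m l := by simp [gapf]

lemma gapf_right {l r : ℝ} (hlr : l ≠ r) : gapf g m l r r = m r := by
  have h : r - l ≠ 0 := sub_ne_zero.mpr (Ne.symm hlr)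
  rw [gapf, div_self h]
  simp

lemma continuous_gapf (l r : ℝ) : Continuous (fun x => gapf g m l r x) := by
  unfold gapf
  have c1 : Continuous (fun x : ℝ => (x - l) / (r - l)) :=
    (continuous_id.sub continuous_const).div_const _
  exact ((continuous_const.add (c1.smul continuous_const)).add
    ((((continuous_const.mul c1).mul (continuous_const.sub c1)).div_const _).smul
      continuous_const))

lemma integral_gapf {l r : ℝ} (hlr : l < r) :
    ∫ x in l..r, gapf g m l r x = g r - g l := by
  have hL : r - l ≠ 0 := sub_ne_zero.mpr hlr.ne'
  have h1 : (∫ x in l..r, (x - l)) = (r - l)^2/2 := by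
    rw [intervalIntegral.integral_comp_sub_right (fun u => u) l]
    simp only [sub_self, integral_id]
    ring
  have h2 : (∫ x in l..r, (x - l)^2) = (r - l)^3/3 := by
    rw [intervalIntegral.integral_comp_sub_right (fun u => u^2) l]
    simp only [sub_self, integral_pow]
    norm_num
  have key : ∀ x : ℝ, gapf g m l r x =
      m l + ((x - l) * (r - l)⁻¹) • (m r - m l) +
        ((x - l) * (6 * ((r - l)^2)⁻¹) - (x - l)^2 * (6 * ((r - l)^3)⁻¹)) •
          (g r - g l - ((r - l) / 2) • (m l + m r)) := by
    intro x
    have e1 : (x - l) / (r - l) = (x - l) * (r - l)⁻¹ := div_eq_mul_inv _ _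
    have e2 : 6 * ((x - l) / (r - l)) * (1 - (x - l) / (r - l)) / (r - l)
        = (x - l) * (6 * ((r - l)^2)⁻¹) - (x - l)^2 * (6 * ((r - l)^3)⁻¹) := by
      field_simp
    rw [gapf, e2, e1]
  have i3 : IntervalIntegrable (fun x : ℝ => (x - l) * (6 * ((r - l)^2)⁻¹))
      MeasureTheory.volume l r := by
    apply Continuous.intervalIntegrable; fun_prop
  have i4 : IntervalIntegrable (fun x : ℝ => (x - l)^2 * (6 * ((r - l)^3)⁻¹))
      MeasureTheory.volume l r := by
    apply Continuous.intervalIntegrable; fun_prop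
  have i1 : IntervalIntegrable (fun x : ℝ => ((x - l) * (r - l)⁻¹) • (m r - m l))
      MeasureTheory.volume l r := by
    apply Continuous.intervalIntegrable; fun_prop
  have i2 : IntervalIntegrable (fun x : ℝ =>
      ((x - l) * (6 * ((r - l)^2)⁻¹) - (x - l)^2 * (6 * ((r - l)^3)⁻¹)) •
      (g r - g l - ((r - l) / 2) • (m l + m r))) MeasureTheory.volume l r := by
    apply Continuous.intervalIntegrable; fun_prop
  have i0 : IntervalIntegrable (fun _ : ℝ => m l) MeasureTheory.volume l r :=
    intervalIntegrable_const
  have s1 : (∫ x in l..r, (x - l) * (r - l)⁻¹) = (r - l)/2 := by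
    rw [intervalIntegral.integral_mul_const, h1]
    field_simp
  have s2 : (∫ x in l..r, ((x - l) * (6 * ((r - l)^2)⁻¹) - (x - l)^2 * (6 * ((r - l)^3)⁻¹)))
      = 1 := by
    rw [intervalIntegral.integral_sub i3 i4, intervalIntegral.integral_mul_const,
      intervalIntegral.integral_mul_const, h1, h2]
    field_simp
    ring
  calc ∫ x in l..r, gapf g m l r x
      = ∫ x in l..r, (m l + ((x - l) * (r - l)⁻¹) • (m r - m l) +
        ((x - l) * (6 * ((r - l)^2)⁻¹) - (x - l)^2 * (6 * ((r - l)^3)⁻¹)) •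
          (g r - g l - ((r - l) / 2) • (m l + m r))) := by
        simp only [key]
    _ = (r - l) • m l + ((r - l)/2) • (m r - m l) +
          (1 : ℝ) • (g r - g l - ((r - l) / 2) • (m l + m r)) := by
        rw [intervalIntegral.integral_add (i0.add i1) i2, intervalIntegral.integral_add i0 i1,
          intervalIntegral.integral_const, intervalIntegral.integral_smul_const,
          intervalIntegral.integral_smul_const, s1, s2]
    _ = g r - g l := by module

lemma m_diff_le {c s t : ℝ} {gs gt ms mt : F} (hts : t ≠ s)
    (h1 : ‖gt - gs - (t - s) • ms‖ ≤ c * |t - s|)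
    (h2 : ‖gs - gt - (s - t) • mt‖ ≤ c * |s - t|) :
    ‖mt - ms‖ ≤ 2 * c := by
  have hpos : 0 < |t - s| := abs_pos.mpr (sub_ne_zero.mpr hts)
  have key : (t - s) • (mt - ms) =
      (gt - gs - (t - s) • ms) + (gs - gt - (s - t) • mt) := by module
  have habs : |s - t| = |t - s| := abs_sub_comm s t
  have hb : |t - s| * ‖mt - ms‖ ≤ |t - s| * (2 * c) := by
    calc |t - s| * ‖mt - ms‖ = ‖(t - s) • (mt - ms)‖ := by
          rw [norm_smul, Real.norm_eq_abs]
      _ = ‖(gt - gs - (t - s) • ms) + (gs - gt - (s - t) • mt)‖ := by rw [← key]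
      _ ≤ c * |t - s| + c * |s - t| := (norm_add_le _ _).trans (add_le_add h1 h2)
      _ = |t - s| * (2 * c) := by rw [habs]; ring
  exact le_of_mul_le_mul_left hb hpos

lemma w_bound {c l r : ℝ} {gl gr ml mr : F} (hc : 0 ≤ c) (hlr : l ≤ r)
    (h1 : ‖gr - gl - (r - l) • ml‖ ≤ c * |r - l|)
    (h2 : ‖mr - ml‖ ≤ 2 * c) :
    ‖gr - gl - ((r - l)/2) • (ml + mr)‖ ≤ 2 * c * (r - l) := by
  have key : gr - gl - ((r - l)/2) • (ml + mr) =
      (gr - gl - (r - l) • ml) - ((r - l)/2) • (mr - ml) := by module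
  have habs : |r - l| = r - l := abs_of_nonneg (by linarith)
  have h1' : ‖gr - gl - (r - l) • ml‖ ≤ c * (r - l) := by rwa [habs] at h1
  have h3 : ‖((r - l)/2) • (mr - ml)‖ = (r - l)/2 * ‖mr - ml‖ := by
    rw [norm_smul, Real.norm_eq_abs, abs_of_nonneg (by linarith : (0:ℝ) ≤ (r - l)/2)]
  rw [key]
  refine (norm_sub_le _ _).trans ?_
  rw [h3]
  nlinarith [mul_le_mul_of_nonneg_left h2 (show (0:ℝ) ≤ (r - l)/2 by linarith)]


section psiCont

variable {S : Set ℝ} {g m : ℝ → F} {C : ℝ}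

lemma not_mem_of_lt_sInf (hS : IsCompact S) {y : ℝ} (hy : y < sInf S) : y ∉ S :=
  fun h => absurd (csInf_le hS.bddBelow h) (not_le_of_gt hy)

lemma not_mem_of_sSup_lt (hS : IsCompact S) {y : ℝ} (hy : sSup S < y) : y ∉ S :=
  fun h => absurd (le_csSup hS.bddAbove h) (not_le_of_gt hy)

lemma psi_close (hS : IsCompact S) (hne : S.Nonempty) (hC0 : 0 ≤ C)
    (hC : ∀ s ∈ S, ∀ t ∈ S, ‖g t - g s - (t - s) • m s‖ ≤ C * |t - s|)
    {x : ℝ} (hx : x ∈ S) {ε δ : ℝ} (hε : 0 < ε) (hδ : 0 < δ)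
    (hWδ : ∀ s ∈ S, ∀ t ∈ S, |t - s| ≤ δ → ‖g t - g s - (t - s) • m s‖ ≤ ε * |t - s|) :
    ∀ y, |y - x| ≤ min (δ/2) (ε*δ/(2*(C+1))) → ‖psi S g m y - m x‖ ≤ 16 * ε := by
  intro y hy
  have hδ'δ : min (δ/2) (ε*δ/(2*(C+1))) ≤ δ/2 := min_le_left _ _
  have hδ'2 : min (δ/2) (ε*δ/(2*(C+1))) ≤ ε*δ/(2*(C+1)) := min_le_right _ _
  have hmW : ∀ s ∈ S, ∀ t ∈ S, |t - s| ≤ δ → ‖m t - m s‖ ≤ 2 * ε := by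
    intro s hs t ht hst
    rcases eq_or_ne t s with rfl | hts
    · simpa using by positivity
    · exact m_diff_le hts (hWδ s hs t ht hst) (hWδ t ht s hs (by rwa [abs_sub_comm]))
  have hmC : ∀ s ∈ S, ∀ t ∈ S, ‖m t - m s‖ ≤ 2 * C := by
    intro s hs t ht
    rcases eq_or_ne t s with rfl | hts
    · simpa using by positivity
    · exact m_diff_le hts (hC s hs t ht) (hC t ht s hs)
  by_cases hyS : y ∈ S
  · rw [psi, if_pos hyS]
    exact (hmW x hx y hyS (hy.trans (by linarith))).trans (by linarith)
  rcases lt_or_ge y (sInf S) with hylt | hyge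
  · rw [psi, if_neg hyS, lpt_of_lt hS hne hylt, rpt_of_lt hS hne hylt, gapf_self]
    have hax : sInf S ∈ S := hS.sInf_mem hne
    have h2 : sInf S ≤ x := csInf_le hS.bddBelow hx
    have hyx : |y - x| = x - y := by rw [abs_sub_comm]; exact abs_of_nonneg (by linarith)
    have h1 : |sInf S - x| ≤ δ := by
      rw [abs_sub_comm, abs_of_nonneg (by linarith)]
      rw [hyx] at hy
      linarith
    exact (hmW x hx _ hax h1).trans (by linarith)
  rcases lt_or_ge (sSup S) y with hygt | hyle
  · rw [psi, if_neg hyS, lpt_of_gt hS hne hygt, rpt_of_gt hS hne hygt, gapf_self]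
    have hbx : sSup S ∈ S := hS.sSup_mem hne
    have h2 : x ≤ sSup S := le_csSup hS.bddAbove hx
    have hyx : |y - x| = y - x := abs_of_nonneg (by linarith)
    have h1 : |sSup S - x| ≤ δ := by
      rw [abs_of_nonneg (by linarith)]
      rw [hyx] at hy
      linarith
    exact (hmW x hx _ hbx h1).trans (by linarith)
  -- main case : sInf S ≤ y ≤ sSup S, y ∉ S
  have hl : lpt S y ∈ S := lpt_mem hS hne y
  have hr : rpt S y ∈ S := rpt_mem hS hne y
  have hly : lpt S y < y := lpt_lt hS hne hyS hyge
  have hyr : y < rpt S y := lt_rpt hS hne hyS hyle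
  set l := lpt S y with hldef
  set r := rpt S y with hrdef
  have hL : 0 < r - l := by linarith
  have hLne : r - l ≠ 0 := ne_of_gt hL
  have hxgap : x ∉ Ioo l r := gap_empty hS hne hx
  rw [psi, if_neg hyS, ← hldef, ← hrdef]
  set t := (y - l)/(r - l) with htdef
  set w := g r - g l - ((r - l)/2) • (m l + m r) with hwdef
  have ht0 : 0 < t := div_pos (by linarith) hL
  have ht1 : t < 1 := (div_lt_one hL).mpr (by linarith)
  have hcoef : 0 ≤ 6 * t * (1 - t) / (r - l) := by
    apply div_nonneg _ hL.le
    nlinarith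
  have hwC : ‖w‖ ≤ 2 * C * (r - l) :=
    w_bound hC0 (by linarith) (hC l hl r hr) (hmC l hl r hr)
  have hb3 : ‖(6 * t * (1 - t) / (r - l)) • w‖ = (6 * t * (1 - t) / (r - l)) * ‖w‖ := by
    rw [norm_smul, Real.norm_eq_abs, abs_of_nonneg hcoef]
  have hside : x ≤ l ∨ r ≤ x := by
    rcases le_or_gt x l with h | h
    · exact Or.inl h
    rcases le_or_gt r x with h' | h'
    · exact Or.inr h'
    · exact absurd ⟨h, h'⟩ hxgap
  rcases hside with hxl | hrx
  · -- x to the left of the gap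
    have hyx : |y - x| = y - x := abs_of_nonneg (by linarith)
    rw [hyx] at hy
    have hlx : |l - x| ≤ δ := by rw [abs_of_nonneg (by linarith)]; linarith
    have hml : ‖m l - m x‖ ≤ 2 * ε := hmW x hx l hl hlx
    have hdecomp : gapf g m l r y - m x
        = (m l - m x) + t • (m r - m l) + (6 * t * (1 - t) / (r - l)) • w := by
      rw [gapf]; abel
    rw [hdecomp]
    refine (norm_add₃_le).trans ?_
    have hb2 : ‖t • (m r - m l)‖ = t * ‖m r - m l‖ := by
      rw [norm_smul, Real.norm_eq_abs, abs_of_pos ht0]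
    rw [hb2, hb3]
    rcases le_or_gt (r - l) δ with hsmall | hbig
    · have hmrl : ‖m r - m l‖ ≤ 2 * ε := hmW l hl r hr (by rw [abs_of_nonneg hL.le]; exact hsmall)
      have hw : ‖w‖ ≤ 2 * ε * (r - l) :=
        w_bound hε.le (by linarith)
          (hWδ l hl r hr (by rw [abs_of_nonneg hL.le]; exact hsmall)) hmrl
      have e3 : (6 * t * (1 - t) / (r - l)) * ‖w‖ ≤ 12 * ε * (t * (1 - t)) := by
        have h4 := mul_le_mul_of_nonneg_left hw hcoef
        have h5 : 6 * t * (1 - t) / (r - l) * (2 * ε * (r - l)) = 12 * ε * (t * (1 - t)) := by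
          field_simp; ring
        linarith [h4, h5.le, h5.ge]
      have e4 : t * (1 - t) ≤ 1/4 := by nlinarith [sq_nonneg (t - 1/2)]
      have e2 : t * ‖m r - m l‖ ≤ 2 * ε := by nlinarith [norm_nonneg (m r - m l)]
      nlinarith
    · -- big gap
      have htb : t ≤ ε/(2*(C+1)) := by
        have h1 : t ≤ (y - x)/(r - l) := by
          rw [htdef]; gcongr
        have h2 : (y - x)/(r - l) ≤ (min (δ/2) (ε*δ/(2*(C+1))))/δ :=
          div_le_div₀ (by positivity) hy hδ hbig.le
        have h3 : (min (δ/2) (ε*δ/(2*(C+1))))/δ ≤ (ε*δ/(2*(C+1)))/δ := by gcongr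
        have h4 : (ε*δ/(2*(C+1)))/δ = ε/(2*(C+1)) := by field_simp
        linarith
      have e2 : t * ‖m r - m l‖ ≤ ε := by
        have := mul_le_mul htb (hmC l hl r hr) (norm_nonneg _) (by positivity)
        have h5 : ε/(2*(C+1)) * (2*C) ≤ ε := by
          rw [div_mul_eq_mul_div, div_le_iff₀ (by linarith : (0:ℝ) < 2*(C+1))]
          nlinarith
        linarith
      have e3 : (6 * t * (1 - t) / (r - l)) * ‖w‖ ≤ 6 * ε := by
        have h4 := mul_le_mul_of_nonneg_left hwC hcoef
        have h5 : 6 * t * (1 - t) / (r - l) * (2 * C * (r - l)) = 12 * C * (t * (1 - t)) := by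
          field_simp; ring
        have h6 : 12 * C * (t * (1 - t)) ≤ 12 * C * t :=
          mul_le_mul_of_nonneg_left (by nlinarith [sq_nonneg t]) (by positivity)
        have h7 : 12 * C * t ≤ 12 * C * (ε/(2*(C+1))) := by
          apply mul_le_mul_of_nonneg_left htb (by positivity)
        have h8 : 12 * C * (ε/(2*(C+1))) ≤ 6 * ε := by
          rw [mul_div_assoc', div_le_iff₀ (by linarith : (0:ℝ) < 2*(C+1))]
          nlinarith
        linarith
      nlinarith
  · -- x to the right of the gap
    have hyx : |y - x| = x - y := by rw [abs_sub_comm]; exact abs_of_nonneg (by linarith)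
    rw [hyx] at hy
    have hrx' : |r - x| ≤ δ := by
      rw [abs_sub_comm, abs_of_nonneg (by linarith)]; linarith
    have hmr : ‖m r - m x‖ ≤ 2 * ε := hmW x hx r hr hrx'
    have hdecomp : gapf g m l r y - m x
        = (m r - m x) + (1 - t) • (m l - m r) + (6 * t * (1 - t) / (r - l)) • w := by
      rw [gapf]; module
    rw [hdecomp]
    refine (norm_add₃_le).trans ?_
    have hb2 : ‖(1 - t) • (m l - m r)‖ = (1 - t) * ‖m l - m r‖ := by
      rw [norm_smul, Real.norm_eq_abs, abs_of_pos (by linarith)]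
    rw [hb2, hb3]
    have h1t : 1 - t = (r - y)/(r - l) := by rw [htdef]; field_simp; ring
    rcases le_or_gt (r - l) δ with hsmall | hbig
    · have hmrl : ‖m l - m r‖ ≤ 2 * ε := by
        have := hmW r hr l hl (by rw [abs_sub_comm, abs_of_nonneg hL.le]; exact hsmall)
        exact this
      have hw : ‖w‖ ≤ 2 * ε * (r - l) :=
        w_bound hε.le (by linarith)
          (hWδ l hl r hr (by rw [abs_of_nonneg hL.le]; exact hsmall))
          (hmW l hl r hr (by rw [abs_of_nonneg hL.le]; exact hsmall))
      have e3 : (6 * t * (1 - t) / (r - l)) * ‖w‖ ≤ 12 * ε * (t * (1 - t)) := by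
        have h4 := mul_le_mul_of_nonneg_left hw hcoef
        have h5 : 6 * t * (1 - t) / (r - l) * (2 * ε * (r - l)) = 12 * ε * (t * (1 - t)) := by
          field_simp; ring
        linarith [h4, h5.le]
      have e4 : t * (1 - t) ≤ 1/4 := by nlinarith [sq_nonneg (t - 1/2)]
      have e2 : (1 - t) * ‖m l - m r‖ ≤ 2 * ε := by nlinarith [norm_nonneg (m l - m r)]
      nlinarith
    · have htb : 1 - t ≤ ε/(2*(C+1)) := by
        have h1 : 1 - t ≤ (x - y)/(r - l) := by
          rw [h1t]; gcongr
        have h2 : (x - y)/(r - l) ≤ (min (δ/2) (ε*δ/(2*(C+1))))/δ :=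
          div_le_div₀ (by positivity) hy hδ hbig.le
        have h3 : (min (δ/2) (ε*δ/(2*(C+1))))/δ ≤ (ε*δ/(2*(C+1)))/δ := by gcongr
        have h4 : (ε*δ/(2*(C+1)))/δ = ε/(2*(C+1)) := by field_simp
        linarith
      have e2 : (1 - t) * ‖m l - m r‖ ≤ ε := by
        have hmlr : ‖m l - m r‖ ≤ 2 * C := hmC r hr l hl
        have := mul_le_mul htb hmlr (norm_nonneg _) (by positivity)
        have h5 : ε/(2*(C+1)) * (2*C) ≤ ε := by
          rw [div_mul_eq_mul_div, div_le_iff₀ (by linarith : (0:ℝ) < 2*(C+1))]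
          nlinarith
        linarith
      have e3 : (6 * t * (1 - t) / (r - l)) * ‖w‖ ≤ 6 * ε := by
        have h4 := mul_le_mul_of_nonneg_left hwC hcoef
        have h5 : 6 * t * (1 - t) / (r - l) * (2 * C * (r - l)) = 12 * C * (t * (1 - t)) := by
          field_simp; ring
        have h6 : 12 * C * (t * (1 - t)) ≤ 12 * C * (1 - t) :=
          mul_le_mul_of_nonneg_left (by nlinarith [sq_nonneg (1 - t)]) (by positivity)
        have h7 : 12 * C * (1 - t) ≤ 12 * C * (ε/(2*(C+1))) :=
          mul_le_mul_of_nonneg_left htb (by positivity)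
        have h8 : 12 * C * (ε/(2*(C+1))) ≤ 6 * ε := by
          rw [mul_div_assoc', div_le_iff₀ (by linarith : (0:ℝ) < 2*(C+1))]
          nlinarith
        linarith
      nlinarith

lemma psi_continuous (hS : IsCompact S) (hne : S.Nonempty) (hC0 : 0 ≤ C)
    (hC : ∀ s ∈ S, ∀ t ∈ S, ‖g t - g s - (t - s) • m s‖ ≤ C * |t - s|)
    (hW : ∀ ε > 0, ∃ δ > 0, ∀ s ∈ S, ∀ t ∈ S, |t - s| ≤ δ →
      ‖g t - g s - (t - s) • m s‖ ≤ ε * |t - s|) :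
    Continuous (psi S g m) := by
  rw [continuous_iff_continuousAt]
  intro x
  by_cases hx : x ∈ S
  · rw [Metric.continuousAt_iff]
    intro ε hε
    obtain ⟨δ, hδ, hWδ⟩ := hW (ε/64) (by positivity)
    refine ⟨min (δ/2) ((ε/64)*δ/(2*(C+1))), by positivity, fun {y} hy => ?_⟩
    have hcl := psi_close hS hne hC0 hC hx (by positivity : (0:ℝ) < ε/64) hδ hWδ y
      (le_of_lt (by rwa [Real.dist_eq] at hy))
    rw [dist_eq_norm]
    have hpx : psi S g m x = m x := by rw [psi, if_pos hx]
    rw [hpx]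
    calc ‖psi S g m y - m x‖ ≤ 16 * (ε/64) := hcl
      _ < ε := by linarith
  · rcases lt_or_ge x (sInf S) with h | h
    · have hev : psi S g m =ᶠ[𝓝 x] (fun _ => m (sInf S)) := by
        filter_upwards [Iio_mem_nhds h] with y hy
        rw [psi, if_neg (not_mem_of_lt_sInf hS hy), lpt_of_lt hS hne hy, rpt_of_lt hS hne hy,
          gapf_self]
      exact continuousAt_const.congr hev.symm
    rcases lt_or_ge (sSup S) x with h' | h'
    · have hev : psi S g m =ᶠ[𝓝 x] (fun _ => m (sSup S)) := by
        filter_upwards [Ioi_mem_nhds h'] with y hy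
        rw [psi, if_neg (not_mem_of_sSup_lt hS hy), lpt_of_gt hS hne hy, rpt_of_gt hS hne hy,
          gapf_self]
      exact continuousAt_const.congr hev.symm
    · have hlx : lpt S x < x := lpt_lt hS hne hx h
      have hxr : x < rpt S x := lt_rpt hS hne hx h'
      have hev : psi S g m =ᶠ[𝓝 x] gapf g m (lpt S x) (rpt S x) := by
        filter_upwards [Ioo_mem_nhds hlx hxr] with y hy
        obtain ⟨e1, e2, e3⟩ := lpt_rpt_of_gap hS hne (lpt_mem hS hne x) (rpt_mem hS hne x)
          (fun z hz => gap_empty hS hne hz) hy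
        rw [psi, if_neg e3, e1, e2]
      exact ((continuous_gapf g m (lpt S x) (rpt S x)).continuousAt).congr hev.symm

end psiCont

section Hfun

variable {S : Set ℝ} {g m : ℝ → F} {C : ℝ}

noncomputable def Hfun (S : Set ℝ) (g m : ℝ → F) (x : ℝ) : F :=
  g (lpt S x) + ∫ t in (lpt S x)..x, psi S g m t

lemma Hfun_self (hS : IsCompact S) (hne : S.Nonempty) {x : ℝ} (hx : x ∈ S) :
    Hfun S g m x = g x := by
  rw [Hfun, lpt_self hS hne hx, intervalIntegral.integral_same, add_zero]

lemma psi_eqOn_gap (hS : IsCompact S) (hne : S.Nonempty) {l r : ℝ} (hl : l ∈ S) (hr : r ∈ S)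
    (hlr : l < r) (hgap : ∀ z ∈ S, z ∉ Ioo l r) :
    EqOn (psi S g m) (fun x => gapf g m l r x) (Icc l r) := by
  intro z hz
  show psi S g m z = gapf g m l r z
  rcases eq_or_lt_of_le hz.1 with rfl | hlz
  · rw [psi, if_pos hl, gapf_left]
  rcases eq_or_lt_of_le hz.2 with rfl | hzr
  · rw [psi, if_pos hr, gapf_right g m hlr.ne]
  · obtain ⟨e1, e2, e3⟩ := lpt_rpt_of_gap hS hne hl hr hgap ⟨hlz, hzr⟩
    rw [psi, if_neg e3, e1, e2]

lemma integral_psi_gap (hS : IsCompact S) (hne : S.Nonempty) {l r : ℝ} (hl : l ∈ S)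
    (hr : r ∈ S) (hlr : l < r) (hgap : ∀ z ∈ S, z ∉ Ioo l r) :
    ∫ x in l..r, psi S g m x = g r - g l := by
  rw [intervalIntegral.integral_congr (g := fun x => gapf g m l r x)
    (by rw [uIcc_of_le hlr.le]; exact psi_eqOn_gap hS hne hl hr hlr hgap)]
  exact integral_gapf g m hlr

lemma Hfun_eq_right (hS : IsCompact S) (hne : S.Nonempty)
    (hcont : Continuous (psi S g m)) (x : ℝ) :
    Hfun S g m x = g (rpt S x) - ∫ t in x..(rpt S x), psi S g m t := by
  by_cases hx : x ∈ S
  · rw [Hfun, lpt_self hS hne hx, rpt_self hS hne hx, intervalIntegral.integral_same]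
    simp
  rcases lt_or_ge x (sInf S) with h | h
  · rw [Hfun, lpt_of_lt hS hne h, rpt_of_lt hS hne h, intervalIntegral.integral_symm]
    abel
  rcases lt_or_ge (sSup S) x with h' | h'
  · rw [Hfun, lpt_of_gt hS hne h', rpt_of_gt hS hne h', intervalIntegral.integral_symm]
    abel
  · have hlx : lpt S x < x := lpt_lt hS hne hx h
    have hxr : x < rpt S x := lt_rpt hS hne hx h'
    have hadj := intervalIntegral.integral_add_adjacent_intervals
      (hcont.intervalIntegrable (μ := MeasureTheory.volume) (lpt S x) x)
      (hcont.intervalIntegrable (μ := MeasureTheory.volume) x (rpt S x))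
    have hgi : ∫ t in (lpt S x)..(rpt S x), psi S g m t = g (rpt S x) - g (lpt S x) :=
      integral_psi_gap hS hne (lpt_mem hS hne x) (rpt_mem hS hne x) (hlx.trans hxr)
        (fun z hz => gap_empty hS hne hz)
    rw [Hfun]
    rw [hgi] at hadj
    have := hadj
    abel_nf
    linear_combination (norm := abel1) this

lemma Hfun_hasDerivAt (hS : IsCompact S) (hne : S.Nonempty) (hC0 : 0 ≤ C)
    (hC : ∀ s ∈ S, ∀ t ∈ S, ‖g t - g s - (t - s) • m s‖ ≤ C * |t - s|)
    (hW : ∀ ε > 0, ∃ δ > 0, ∀ s ∈ S, ∀ t ∈ S, |t - s| ≤ δ →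
      ‖g t - g s - (t - s) • m s‖ ≤ ε * |t - s|)
    (hcont : Continuous (psi S g m)) (x : ℝ) :
    HasDerivAt (Hfun S g m) (psi S g m x) x := by
  by_cases hx : x ∈ S
  · -- the hard case : x ∈ S
    rw [hasDerivAt_iff_isLittleO, Asymptotics.isLittleO_iff]
    intro c hc
    -- continuity of psi at x, quantitative
    obtain ⟨δ₁, hδ₁, hψ⟩ : ∃ δ₁ > 0, ∀ z, |z - x| ≤ δ₁ → ‖psi S g m z - m x‖ ≤ c/4 := by
      have hca : ContinuousAt (psi S g m) x := hcont.continuousAt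
      rw [Metric.continuousAt_iff] at hca
      obtain ⟨δ, hδ, hd⟩ := hca (c/8) (by positivity)
      refine ⟨δ/2, by positivity, fun z hz => ?_⟩
      have hzx : dist z x < δ := by rw [Real.dist_eq]; linarith [hz]
      have := hd hzx
      rw [dist_eq_norm] at this
      have hpx : psi S g m x = m x := by rw [psi, if_pos hx]
      rw [hpx] at this
      linarith
    obtain ⟨δ₂, hδ₂, hWδ⟩ := hW (c/4) (by positivity)
    rw [Metric.eventually_nhds_iff]
    refine ⟨min δ₁ δ₂, by positivity, fun {y} hy => ?_⟩
    rw [Real.dist_eq] at hy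
    have hyδ₁ : |y - x| ≤ δ₁ := le_of_lt (lt_of_lt_of_le hy (min_le_left _ _))
    have hyδ₂ : |y - x| ≤ δ₂ := le_of_lt (lt_of_lt_of_le hy (min_le_right _ _))
    have hpx : psi S g m x = m x := by rw [psi, if_pos hx]
    have hHx : Hfun S g m x = g x := Hfun_self hS hne hx
    rw [hpx, hHx]
    rcases le_or_gt x y with hxy | hyx
    · -- y to the right
      set s' := lpt S y with hs'def
      have hs'S : s' ∈ S := lpt_mem hS hne y
      have hxs' : x ≤ s' := le_lpt hS hne hx hxy
      have hs'y : s' ≤ y := lpt_le hS hne (le_trans (csInf_le hS.bddBelow hx) hxy)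
      have hIsub : (∫ t in s'..y, (psi S g m t - m x))
          = (∫ t in s'..y, psi S g m t) - (y - s') • m x := by
        rw [intervalIntegral.integral_sub (hcont.intervalIntegrable _ _)
          intervalIntegrable_const, intervalIntegral.integral_const]
      have hexp : Hfun S g m y - g x - (y - x) • m x
          = (g s' - g x - (s' - x) • m x) + (∫ t in s'..y, (psi S g m t - m x)) := by
        rw [hIsub, Hfun]
        rw [← hs'def]
        module
      rw [hexp]
      have hb1 : ‖g s' - g x - (s' - x) • m x‖ ≤ (c/4) * |s' - x| :=
        hWδ x hx s' hs'S (by rw [abs_of_nonneg (by linarith)]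
                             rw [abs_of_nonneg (by linarith : (0:ℝ) ≤ y - x)] at hyδ₂; linarith)
      have hb2 : ‖∫ t in s'..y, (psi S g m t - m x)‖ ≤ (c/4) * |y - s'| := by
        apply intervalIntegral.norm_integral_le_of_norm_le_const
        intro z hz
        rw [uIoc_of_le hs'y] at hz
        apply hψ
        rw [abs_of_nonneg (by linarith [hz.1] : (0:ℝ) ≤ z - x)]
        rw [abs_of_nonneg (by linarith : (0:ℝ) ≤ y - x)] at hyδ₁
        linarith [hz.2]
      refine (norm_add_le _ _).trans ?_
      have hyx' : |y - x| = y - x := abs_of_nonneg (by linarith)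
      rw [Real.norm_eq_abs, hyx']
      have e1 : |s' - x| ≤ y - x := by rw [abs_of_nonneg (by linarith)]; linarith
      have e2 : |y - s'| ≤ y - x := by rw [abs_of_nonneg (by linarith)]; linarith
      nlinarith
    · -- y to the left
      set s' := rpt S y with hs'def
      have hs'S : s' ∈ S := rpt_mem hS hne y
      have hs'x : s' ≤ x := rpt_le hS hne hx hyx.le
      have hys' : y ≤ s' := le_rpt hS hne (le_trans hyx.le (le_csSup hS.bddAbove hx))
      have hIsub : (∫ t in y..s', (psi S g m t - m x))
          = (∫ t in y..s', psi S g m t) - (s' - y) • m x := by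
        rw [intervalIntegral.integral_sub (hcont.intervalIntegrable _ _)
          intervalIntegrable_const, intervalIntegral.integral_const]
      have hexp : Hfun S g m y - g x - (y - x) • m x
          = (g s' - g x - (s' - x) • m x) - (∫ t in y..s', (psi S g m t - m x)) := by
        rw [hIsub, Hfun_eq_right hS hne hcont y, ← hs'def]
        module
      rw [hexp]
      have hb1 : ‖g s' - g x - (s' - x) • m x‖ ≤ (c/4) * |s' - x| := by
        apply hWδ x hx s' hs'S
        rw [abs_sub_comm, abs_of_nonneg (by linarith)]
        rw [abs_sub_comm, abs_of_nonneg (by linarith : (0:ℝ) ≤ x - y)] at hyδ₂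
        linarith
      have hb2 : ‖∫ t in y..s', (psi S g m t - m x)‖ ≤ (c/4) * |s' - y| := by
        apply intervalIntegral.norm_integral_le_of_norm_le_const
        intro z hz
        rw [uIoc_of_le hys'] at hz
        apply hψ
        rw [abs_sub_comm, abs_of_nonneg (by linarith [hz.2] : (0:ℝ) ≤ x - z)]
        rw [abs_sub_comm, abs_of_nonneg (by linarith : (0:ℝ) ≤ x - y)] at hyδ₁
        linarith [hz.1]
      refine (norm_sub_le _ _).trans ?_
      have hyx' : |y - x| = x - y := by rw [abs_sub_comm]; exact abs_of_nonneg (by linarith)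
      rw [Real.norm_eq_abs, hyx']
      have e1 : |s' - x| ≤ x - y := by
        rw [abs_sub_comm, abs_of_nonneg (by linarith)]; linarith
      have e2 : |s' - y| ≤ x - y := by rw [abs_of_nonneg (by linarith)]; linarith
      nlinarith
  · -- x ∉ S : lpt is locally constant
    obtain ⟨U, hUopen, hxU, hUconst⟩ : ∃ U : Set ℝ, IsOpen U ∧ x ∈ U ∧
        ∀ y ∈ U, lpt S y = lpt S x := by
      rcases lt_or_ge x (sInf S) with h | h
      · exact ⟨Iio (sInf S), isOpen_Iio, h, fun y hy => by
          rw [lpt_of_lt hS hne hy, lpt_of_lt hS hne h]⟩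
      rcases lt_or_ge (sSup S) x with h' | h'
      · exact ⟨Ioi (sSup S), isOpen_Ioi, h', fun y hy => by
          rw [lpt_of_gt hS hne hy, lpt_of_gt hS hne h']⟩
      · refine ⟨Ioo (lpt S x) (rpt S x), isOpen_Ioo,
          ⟨lpt_lt hS hne hx h, lt_rpt hS hne hx h'⟩, fun y hy => ?_⟩
        exact (lpt_rpt_of_gap hS hne (lpt_mem hS hne x) (rpt_mem hS hne x)
          (fun z hz => gap_empty hS hne hz) hy).1
    have hF : HasDerivAt (fun y => g (lpt S x) + ∫ t in (lpt S x)..y, psi S g m t)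
        (psi S g m x) x := by
      exact (intervalIntegral.integral_hasDerivAt_right
        (hcont.intervalIntegrable _ _)
        (hcont.stronglyMeasurable.stronglyMeasurableAtFilter)
        hcont.continuousAt).const_add _
    apply hF.congr_of_eventuallyEq
    filter_upwards [hUopen.mem_nhds hxU] with y hy
    rw [Hfun, hUconst y hy]

theorem whitney1d (hS : IsCompact S) (hne : S.Nonempty) (hC0 : 0 ≤ C)
    (hC : ∀ s ∈ S, ∀ t ∈ S, ‖g t - g s - (t - s) • m s‖ ≤ C * |t - s|)
    (hW : ∀ ε > 0, ∃ δ > 0, ∀ s ∈ S, ∀ t ∈ S, |t - s| ≤ δ →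
      ‖g t - g s - (t - s) • m s‖ ≤ ε * |t - s|) :
    ∃ φ : ℝ → F, ContDiff ℝ 1 φ ∧ (∀ s ∈ S, φ s = g s) ∧
      ∀ s ∈ S, HasDerivAt φ (m s) s := by
  have hcont : Continuous (psi S g m) := psi_continuous hS hne hC0 hC hW
  set φ : ℝ → F := fun x => g (sInf S) + ∫ t in (sInf S)..x, psi S g m t with hφdef
  have hφ' : ∀ x, HasDerivAt φ (psi S g m x) x := fun x =>
    (intervalIntegral.integral_hasDerivAt_right (hcont.intervalIntegrable _ _)
      (hcont.stronglyMeasurable.stronglyMeasurableAtFilter) hcont.continuousAt).const_add _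
  have hH : ∀ x, HasDerivAt (Hfun S g m) (psi S g m x) x :=
    Hfun_hasDerivAt hS hne hC0 hC hW hcont
  have hdiff : ∀ x, HasDerivAt (fun y => Hfun S g m y - φ y) 0 x := fun x => by
    have := (hH x).sub (hφ' x)
    simp only [sub_self] at this
    exact this
  have hconst : ∀ x, Hfun S g m x - φ x = Hfun S g m (sInf S) - φ (sInf S) := fun x =>
    is_const_of_deriv_eq_zero (fun z => (hdiff z).differentiableAt)
      (fun z => (hdiff z).deriv) _ _
  have hav : Hfun S g m (sInf S) - φ (sInf S) = 0 := by
    rw [Hfun_self hS hne (hS.sInf_mem hne), hφdef]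
    simp
  have hHφ : ∀ x, φ x = Hfun S g m x := fun x => by
    have := hconst x
    rw [hav] at this
    linear_combination (norm := abel1) -this
  refine ⟨φ, ?_, fun s hs => ?_, fun s hs => ?_⟩
  · rw [contDiff_one_iff_deriv]
    refine ⟨fun x => (hφ' x).differentiableAt, ?_⟩
    have : deriv φ = psi S g m := funext fun x => (hφ' x).deriv
    rw [this]
    exact hcont
  · rw [hHφ s, Hfun_self hS hne hs]
  · have : psi S g m s = m s := by rw [psi, if_pos hs]
    exact this ▸ hφ' s

end Hfun

end Whitney1D

section Geom

open Filter Metric Module Set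
open scoped Topology RealInnerProductSpace

variable {n : ℕ}

lemma projOp_mem (L : Submodule ℝ (EuclideanSpace ℝ (Fin n))) (x : EuclideanSpace ℝ (Fin n)) :
    projOp L x ∈ L := (Submodule.orthogonalProjectionOnto L x).2

lemma projOp_coe (L : Submodule ℝ (EuclideanSpace ℝ (Fin n))) (x : EuclideanSpace ℝ (Fin n)) :
    projOp L x = (Submodule.orthogonalProjectionOnto L x : EuclideanSpace ℝ (Fin n)) := rfl

lemma projOp_eq_self {L : Submodule ℝ (EuclideanSpace ℝ (Fin n))}
    {x : EuclideanSpace ℝ (Fin n)} (hx : x ∈ L) : projOp L x = x := by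
  rw [projOp_coe, ← Submodule.starProjection_apply, Submodule.starProjection_eq_self_iff]
  exact hx

lemma projOp_norm_apply_le (L : Submodule ℝ (EuclideanSpace ℝ (Fin n)))
    (x : EuclideanSpace ℝ (Fin n)) : ‖projOp L x‖ ≤ ‖x‖ := by
  rw [projOp_coe]
  calc ‖(Submodule.orthogonalProjectionOnto L x : EuclideanSpace ℝ (Fin n))‖
      = ‖Submodule.orthogonalProjectionOnto L x‖ := rfl
    _ ≤ ‖Submodule.orthogonalProjectionOnto L‖ * ‖x‖ := (Submodule.orthogonalProjectionOnto L).le_opNorm x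
    _ ≤ 1 * ‖x‖ := by
        have := Submodule.orthogonalProjectionOnto_norm_le L
        gcongr
    _ = ‖x‖ := one_mul _

lemma sub_projOp_le {L M : Submodule ℝ (EuclideanSpace ℝ (Fin n))}
    {x : EuclideanSpace ℝ (Fin n)} (hx : x ∈ L) :
    ‖x - projOp M x‖ ≤ ‖projOp L - projOp M‖ * ‖x‖ := by
  calc ‖x - projOp M x‖ = ‖(projOp L - projOp M) x‖ := by
        rw [ContinuousLinearMap.sub_apply, projOp_eq_self hx]
    _ ≤ ‖projOp L - projOp M‖ * ‖x‖ := ContinuousLinearMap.le_opNorm _ _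

lemma nat_seq_tendsto {x : ℕ → EuclideanSpace ℝ (Fin n)} {p : EuclideanSpace ℝ (Fin n)}
    (h : ∀ i : ℕ, dist (x i) p ≤ 1/(i+1)) : Tendsto x atTop (𝓝 p) := by
  rw [tendsto_iff_dist_tendsto_zero]
  exact squeeze_zero (fun i => dist_nonneg) h tendsto_one_div_add_atTop_nhds_zero_nat

/-- Half-Lipschitz estimate near `p` from the secant hypothesis. -/
lemma half_lip (K : Set (EuclideanSpace ℝ (Fin n)))
    (V : EuclideanSpace ℝ (Fin n) → Submodule ℝ (EuclideanSpace ℝ (Fin n)))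
    (hsecant : ∀ p ∈ K, ∀ ps qs : ℕ → EuclideanSpace ℝ (Fin n),
      (∀ i, ps i ∈ K) → (∀ i, qs i ∈ K) → (∀ i, ps i ≠ qs i) →
      Tendsto ps atTop (𝓝 p) → Tendsto qs atTop (𝓝 p) →
      Tendsto (fun i => ‖projOp (Submodule.span ℝ {ps i - qs i}) - projOp (V p)‖)
        atTop (𝓝 0))
    {p : EuclideanSpace ℝ (Fin n)} (hp : p ∈ K) :
    ∃ rh > 0, ∀ q ∈ K, ∀ q' ∈ K, dist q p ≤ rh → dist q' p ≤ rh →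
      ‖(q - q') - projOp (V p) (q - q')‖ ≤ (1/2) * ‖q - q'‖ := by
  by_contra hcon
  push_neg at hcon
  have hcon' : ∀ i : ℕ, ∃ q ∈ K, ∃ q' ∈ K, dist q p ≤ 1/(i+1) ∧ dist q' p ≤ 1/(i+1) ∧
      (1/2) * ‖q - q'‖ < ‖(q - q') - projOp (V p) (q - q')‖ := by
    intro i
    exact hcon (1/(i+1)) (by positivity)
  choose qf hqfK q'f hq'fK hd1 hd2 hgt using hcon'
  have hne' : ∀ i, qf i ≠ q'f i := by
    intro i h
    have := hgt i
    rw [h] at this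
    simp at this
  have hsec := hsecant p hp qf q'f hqfK hq'fK hne' (nat_seq_tendsto hd1) (nat_seq_tendsto hd2)
  obtain ⟨i, hi⟩ := (hsec.eventually_lt_const (by norm_num : (0:ℝ) < 1/2)).exists
  have hd : qf i - q'f i ∈ Submodule.span ℝ {qf i - q'f i} := Submodule.mem_span_singleton_self _
  have hb := sub_projOp_le (M := V p) hd
  have hdne : qf i - q'f i ≠ 0 := sub_ne_zero.mpr (hne' i)
  have hpos : 0 < ‖qf i - q'f i‖ := norm_pos_iff.mpr hdne
  have hlt : ‖projOp (Submodule.span ℝ {qf i - q'f i}) - projOp (V p)‖ * ‖qf i - q'f i‖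
      < (1/2) * ‖qf i - q'f i‖ := by
    exact mul_lt_mul_of_pos_right hi hpos
  linarith [hgt i, hb]

/-- Uniform secant estimate on a compact subset of `K`. -/
lemma secant_unif (K : Set (EuclideanSpace ℝ (Fin n)))
    (V : EuclideanSpace ℝ (Fin n) → Submodule ℝ (EuclideanSpace ℝ (Fin n)))
    (hVcont : ∀ p ∈ K, ∀ ε > 0, ∃ δ > 0, ∀ q ∈ K, dist q p < δ →
      ‖projOp (V q) - projOp (V p)‖ < ε)
    (hsecant : ∀ p ∈ K, ∀ ps qs : ℕ → EuclideanSpace ℝ (Fin n),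
      (∀ i, ps i ∈ K) → (∀ i, qs i ∈ K) → (∀ i, ps i ≠ qs i) →
      Tendsto ps atTop (𝓝 p) → Tendsto qs atTop (𝓝 p) →
      Tendsto (fun i => ‖projOp (Submodule.span ℝ {ps i - qs i}) - projOp (V p)‖)
        atTop (𝓝 0))
    (A : Set (EuclideanSpace ℝ (Fin n))) (hA : IsCompact A) (hAK : A ⊆ K) :
    ∀ ε > 0, ∃ δ > 0, ∀ q ∈ A, ∀ q' ∈ A, q ≠ q' → ‖q' - q‖ ≤ δ →
      ‖projOp (Submodule.span ℝ {q' - q}) - projOp (V q)‖ ≤ ε := by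
  intro ε hε
  by_contra hcon
  push_neg at hcon
  have hcon' : ∀ i : ℕ, ∃ q ∈ A, ∃ q' ∈ A, q ≠ q' ∧ ‖q' - q‖ ≤ 1/(i+1) ∧
      ε < ‖projOp (Submodule.span ℝ {q' - q}) - projOp (V q)‖ := by
    intro i
    exact hcon (1/(i+1)) (by positivity)
  choose qf hqfA q'f hq'fA hne' hdist hgt using hcon'
  obtain ⟨qs, hqsA, σ, hσ, hconv⟩ := hA.tendsto_subseq hqfA
  have hconv' : Tendsto (fun i => q'f (σ i)) atTop (𝓝 qs) := by
    rw [tendsto_iff_dist_tendsto_zero]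
    apply squeeze_zero (fun i => dist_nonneg)
      (g := fun i => 1/((σ i : ℝ)+1) + dist (qf (σ i)) qs)
    · intro i
      calc dist (q'f (σ i)) qs ≤ dist (q'f (σ i)) (qf (σ i)) + dist (qf (σ i)) qs :=
            dist_triangle _ _ _
        _ ≤ 1/((σ i : ℝ)+1) + dist (qf (σ i)) qs := by
            gcongr
            rw [dist_eq_norm]
            simpa using hdist (σ i)
    · have h1 : Tendsto (fun i => 1/((σ i : ℝ)+1)) atTop (𝓝 0) :=
        tendsto_one_div_add_atTop_nhds_zero_nat.comp (hσ.tendsto_atTop)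
      have h2 : Tendsto (fun i => dist (qf (σ i)) qs) atTop (𝓝 0) :=
        tendsto_iff_dist_tendsto_zero.1 hconv
      simpa using h1.add h2
  have hqsK : qs ∈ K := hAK hqsA
  have hsec := hsecant qs hqsK (fun i => q'f (σ i)) (fun i => qf (σ i))
    (fun i => hAK (hq'fA (σ i))) (fun i => hAK (hqfA (σ i)))
    (fun i => (hne' (σ i)).symm) hconv' hconv
  -- convergence of V along the subsequence
  have hVconv : Tendsto (fun i => ‖projOp (V (qf (σ i))) - projOp (V qs)‖) atTop (𝓝 0) := by
    rw [Metric.tendsto_atTop]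
    intro ε' hε'
    obtain ⟨δ, hδ, hVδ⟩ := hVcont qs hqsK ε' hε'
    obtain ⟨N, hN⟩ := (Metric.tendsto_atTop.1 hconv) δ hδ
    refine ⟨N, fun i hi => ?_⟩
    rw [Real.dist_eq, sub_zero, abs_of_nonneg (norm_nonneg _)]
    exact hVδ _ (hAK (hqfA (σ i))) (hN i hi)
  have hsum := hsec.add hVconv
  rw [add_zero] at hsum
  obtain ⟨i, hi⟩ := (hsum.eventually_lt_const hε).exists
  have htri : ‖projOp (Submodule.span ℝ {q'f (σ i) - qf (σ i)}) - projOp (V (qf (σ i)))‖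
      ≤ ‖projOp (Submodule.span ℝ {q'f (σ i) - qf (σ i)}) - projOp (V qs)‖ +
        ‖projOp (V (qf (σ i))) - projOp (V qs)‖ := by
    rw [← dist_eq_norm, ← dist_eq_norm, ← dist_eq_norm]
    exact (dist_triangle _ _ _).trans (by rw [dist_comm (projOp (V qs))])
  linarith [hgt (σ i)]

end Geom

open Filter Metric Module Set
open scoped Topology RealInnerProductSpace


/-- Whitney extension theorem, C¹ case, as used in the paper:
a relatively closed set `K ⊆ B ⊆ ℝⁿ` with a continuous line field `V` such that secant
lines of `K` converge to `V` is locally contained in the graph of a `C¹` function from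
`V p` to `(V p)ᗮ`, tangent to `V` along `K`. -/
theorem whitney_C1_extension {n : ℕ}
    (B : Set (EuclideanSpace ℝ (Fin n))) (hB : IsOpen B)
    (K : Set (EuclideanSpace ℝ (Fin n)))
    (hKB : K ⊆ B)
    (hKclosed : ∃ C : Set (EuclideanSpace ℝ (Fin n)), IsClosed C ∧ K = C ∩ B)
    (V : EuclideanSpace ℝ (Fin n) → Submodule ℝ (EuclideanSpace ℝ (Fin n)))
    (hVline : ∀ p ∈ K, finrank ℝ (V p) = 1)
    (hVcont : ∀ p ∈ K, ∀ ε > 0, ∃ δ > 0, ∀ q ∈ K, dist q p < δ →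
      ‖projOp (V q) - projOp (V p)‖ < ε)
    (hsecant : ∀ p ∈ K, ∀ ps qs : ℕ → EuclideanSpace ℝ (Fin n),
      (∀ i, ps i ∈ K) → (∀ i, qs i ∈ K) → (∀ i, ps i ≠ qs i) →
      Tendsto ps atTop (𝓝 p) → Tendsto qs atTop (𝓝 p) →
      Tendsto (fun i => ‖projOp (Submodule.span ℝ {ps i - qs i}) - projOp (V p)‖)
        atTop (𝓝 0)) :
    ∀ p ∈ K, ∃ W ∈ 𝓝 p, ∃ f : (V p) → ((V p)ᗮ : Submodule ℝ (EuclideanSpace ℝ (Fin n))),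
      ContDiff ℝ 1 f ∧
      ∀ q ∈ K ∩ W, ∃ v : V p,
        q = (v : EuclideanSpace ℝ (Fin n)) + (f v : EuclideanSpace ℝ (Fin n)) ∧
        ∃ u : V p, u ≠ 0 ∧
          V q = Submodule.span ℝ
            {((u : EuclideanSpace ℝ (Fin n)) + (fderiv ℝ f v u : EuclideanSpace ℝ (Fin n)))} := by
  intro p hp
  classical
  -- ## a unit vector spanning V p
  obtain ⟨v0, hv0ne, hv0span⟩ := finrank_eq_one_iff'.1 (hVline p hp)
  have hv0E : (v0 : EuclideanSpace ℝ (Fin n)) ≠ 0 :=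
    fun h => hv0ne (Subtype.ext h)
  have hVpspan : V p = (ℝ ∙ ((v0 : EuclideanSpace ℝ (Fin n)))) := by
    apply le_antisymm
    · intro x hx
      obtain ⟨c, hc⟩ := hv0span ⟨x, hx⟩
      rw [Submodule.mem_span_singleton]
      exact ⟨c, congrArg Subtype.val hc⟩
    · rw [Submodule.span_singleton_le_iff_mem]
      exact v0.2
  set e : EuclideanSpace ℝ (Fin n) := ‖(v0 : EuclideanSpace ℝ (Fin n))‖⁻¹ • (v0 : EuclideanSpace ℝ (Fin n)) with hedef
  have hene : ‖e‖ = 1 := norm_smul_inv_norm hv0E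
  have hVpe : V p = ℝ ∙ e := by
    rw [hVpspan, hedef]
    exact (Submodule.span_singleton_smul_eq
      (isUnit_iff_ne_zero.2 (inv_ne_zero (norm_ne_zero_iff.2 hv0E))) _).symm
  have he : e ∈ V p := by rw [hVpe]; exact Submodule.mem_span_singleton_self e
  have hee : ⟪e, e⟫ = (1:ℝ) := by
    rw [real_inner_self_eq_norm_mul_norm, hene, mul_one]
  have hPe : ∀ x, projOp (V p) x = ⟪e, x⟫ • e := by
    intro x
    rw [projOp_coe, hVpe, ← Submodule.starProjection_apply, Submodule.starProjection_singleton, hene]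
    norm_num
  -- ## radii
  obtain ⟨rB, hrB0, hrBsub⟩ : ∃ rB > 0, closedBall p rB ⊆ B := by
    obtain ⟨ε, hε, hball⟩ := Metric.isOpen_iff.1 hB p (hKB hp)
    exact ⟨ε/2, by positivity, (closedBall_subset_ball (by linarith)).trans hball⟩
  obtain ⟨δV, hδV0, hδVc⟩ := hVcont p hp (1/2) (by norm_num)
  obtain ⟨rh, hrh0, hhl⟩ := half_lip K V hsecant hp
  set r := min rB (min (δV/2) rh) with hrdef
  have hr0 : 0 < r := lt_min hrB0 (lt_min (by positivity) hrh0)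
  set Kr := K ∩ closedBall p r with hKrdef
  have hKrK : Kr ⊆ K := inter_subset_left
  have hpKr : p ∈ Kr := ⟨hp, mem_closedBall_self hr0.le⟩
  obtain ⟨Cc, hCc, hKC⟩ := hKclosed
  have hKrcomp : IsCompact Kr := by
    have hsub : closedBall p r ⊆ B :=
      (closedBall_subset_closedBall (min_le_left _ _)).trans hrBsub
    have hKreq : Kr = Cc ∩ closedBall p r := by
      rw [hKrdef, hKC]
      ext q
      exact ⟨fun ⟨⟨h1, _⟩, h3⟩ => ⟨h1, h3⟩, fun ⟨h1, h3⟩ => ⟨⟨h1, hsub h3⟩, h3⟩⟩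
    rw [hKreq]
    exact (isCompact_closedBall p r).of_isClosed_subset
      (hCc.inter Metric.isClosed_closedBall) inter_subset_right
  -- ## half-Lipschitz consequences on Kr
  have hHL2 : ∀ q ∈ Kr, ∀ q' ∈ Kr, ‖(q - q') - ⟪e, q - q'⟫ • e‖ ≤ (1/2) * ‖q - q'‖ := by
    intro q hq q' hq'
    have h1 := hhl q (hKrK hq) q' (hKrK hq')
      ((mem_closedBall.1 hq.2).trans (le_trans (min_le_right _ _) (min_le_right _ _)))
      ((mem_closedBall.1 hq'.2).trans (le_trans (min_le_right _ _) (min_le_right _ _)))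
    rwa [hPe] at h1
  have hnorm2 : ∀ q ∈ Kr, ∀ q' ∈ Kr, ‖q - q'‖ ≤ 2 * |⟪e, q - q'⟫| := by
    intro q hq q' hq'
    have h1 := hHL2 q hq q' hq'
    have h2 : ‖q - q'‖ ≤ ‖⟪e, q - q'⟫ • e‖ + ‖(q - q') - ⟪e, q - q'⟫ • e‖ := by
      have h3 := norm_add_le (⟪e, q - q'⟫ • e) ((q - q') - ⟪e, q - q'⟫ • e)
      simpa using h3
    rw [norm_smul, Real.norm_eq_abs, hene, mul_one] at h2
    linarith
  have hVq2 : ∀ q ∈ Kr, ‖projOp (V q) - projOp (V p)‖ ≤ 1/2 := by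
    intro q hq
    apply le_of_lt (hδVc q (hKrK hq) ?_)
    have h3 : dist q p ≤ r := mem_closedBall.1 hq.2
    have hrδ : r ≤ δV/2 := le_trans (min_le_right _ _) (min_le_left _ _)
    linarith
  have hinj : ∀ q ∈ Kr, ∀ q' ∈ Kr, ⟪e, q⟫ = ⟪e, q'⟫ → q = q' := by
    intro q hq q' hq' heq
    have h2 := hnorm2 q hq q' hq'
    have h3 : ⟪e, q - q'⟫ = 0 := by rw [inner_sub_right, heq, sub_self]
    rw [h3, abs_zero, mul_zero] at h2
    exact sub_eq_zero.1 (norm_le_zero_iff.1 h2)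
  -- ## the compact parameter set S and the section Q
  set S := (fun q => ⟪e, q⟫) '' Kr with hSdef
  have hScomp : IsCompact S := hKrcomp.image (continuous_const.inner continuous_id)
  have hSne : S.Nonempty := ⟨⟪e, p⟫, ⟨p, hpKr, rfl⟩⟩
  set Q : ℝ → EuclideanSpace ℝ (Fin n) := fun s =>
    if h : ∃ q, q ∈ Kr ∧ ⟪e, q⟫ = s then h.choose else p with hQdef
  have hQS : ∀ s ∈ S, Q s ∈ Kr ∧ ⟪e, Q s⟫ = s := by
    intro s hs
    obtain ⟨q, hq, hqs⟩ := hs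
    have hex : ∃ q', q' ∈ Kr ∧ ⟪e, q'⟫ = s := ⟨q, hq, hqs⟩
    simp only [hQdef, dif_pos hex]
    exact hex.choose_spec
  have hQinv : ∀ q ∈ Kr, Q ⟪e, q⟫ = q := by
    intro q hq
    have hs : ⟪e, q⟫ ∈ S := ⟨q, hq, rfl⟩
    exact hinj _ (hQS _ hs).1 q hq (by rw [(hQS _ hs).2])
  -- ## the slope vector field
  set uq : EuclideanSpace ℝ (Fin n) → EuclideanSpace ℝ (Fin n) :=
    fun q => projOp (V q) e with huqdef
  set cq : EuclideanSpace ℝ (Fin n) → ℝ := fun q => ⟪e, uq q⟫ with hcqdef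
  set nu : EuclideanSpace ℝ (Fin n) → EuclideanSpace ℝ (Fin n) :=
    fun q => (cq q)⁻¹ • uq q - e with hnudef
  have hcq_apply : ∀ q, cq q = ⟪e, uq q⟫ := fun _ => rfl
  have hnu_apply : ∀ q, nu q = (cq q)⁻¹ • uq q - e := fun _ => rfl
  have hueq : ∀ q ∈ Kr, ‖uq q - e‖ ≤ 1/2 := by
    intro q hq
    have h1 : uq q - e = (projOp (V q) - projOp (V p)) e := by
      rw [ContinuousLinearMap.sub_apply, projOp_eq_self he]
    rw [h1]
    calc ‖(projOp (V q) - projOp (V p)) e‖ ≤ ‖projOp (V q) - projOp (V p)‖ * ‖e‖ :=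
        ContinuousLinearMap.le_opNorm _ _
      _ ≤ 1/2 := by rw [hene, mul_one]; exact hVq2 q hq
  have hcq_ge : ∀ q ∈ Kr, 1/2 ≤ cq q := by
    intro q hq
    have h2 : |⟪e, uq q - e⟫| ≤ 1/2 := by
      refine (abs_real_inner_le_norm e _).trans ?_
      rw [hene, one_mul]
      exact hueq q hq
    have h4 : ⟪e, uq q - e⟫ = cq q - 1 := by
      rw [inner_sub_right, hee, hcq_apply]
    rw [h4] at h2
    have h5 := (abs_le.1 h2).1
    linarith
  have hcq_le : ∀ q ∈ Kr, cq q ≤ 1 := by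
    intro q hq
    rw [hcq_apply]
    refine (real_inner_le_norm e _).trans ?_
    rw [hene, one_mul]
    calc ‖uq q‖ ≤ ‖e‖ := projOp_norm_apply_le _ _
      _ = 1 := hene
  have hcq_pos : ∀ q ∈ Kr, 0 < cq q := fun q hq =>
    lt_of_lt_of_le (by norm_num) (hcq_ge q hq)
  have hnu_e : ∀ q ∈ Kr, ⟪e, nu q⟫ = 0 := by
    intro q hq
    rw [hnu_apply, inner_sub_right, real_inner_smul_right, ← hcq_apply,
      inv_mul_cancel₀ (hcq_pos q hq).ne', hee, sub_self]
  have hnu_perp : ∀ q ∈ Kr, nu q ∈ (V p)ᗮ := by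
    intro q hq
    rw [Submodule.mem_orthogonal]
    intro x hx
    rw [hVpe, Submodule.mem_span_singleton] at hx
    obtain ⟨a, rfl⟩ := hx
    rw [real_inner_smul_left, hnu_e q hq, mul_zero]
  have hnu_norm : ∀ q ∈ Kr, ‖nu q‖ ≤ 2 := by
    intro q hq
    have hkey : nu q = (cq q)⁻¹ • (uq q - e) + ((cq q)⁻¹ - 1) • e := by
      rw [hnu_apply]; module
    have hc := hcq_ge q hq
    have hc' := hcq_le q hq
    have hcp := hcq_pos q hq
    have hi2 : (cq q)⁻¹ ≤ 2 := by
      rw [← one_div, div_le_iff₀ hcp]; linarith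
    have hi1 : 1 ≤ (cq q)⁻¹ := by
      rw [← one_div, le_div_iff₀ hcp]; linarith
    rw [hkey]
    calc ‖(cq q)⁻¹ • (uq q - e) + ((cq q)⁻¹ - 1) • e‖
        ≤ ‖(cq q)⁻¹ • (uq q - e)‖ + ‖((cq q)⁻¹ - 1) • e‖ := norm_add_le _ _
      _ ≤ 2 := by
          rw [norm_smul, norm_smul, Real.norm_eq_abs, Real.norm_eq_abs, hene, mul_one,
            abs_of_pos (by positivity), abs_of_nonneg (by linarith)]
          have h6 := hueq q hq
          nlinarith [norm_nonneg (uq q - e)]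
  have hVqspan : ∀ q ∈ Kr, V q = Submodule.span ℝ {e + nu q} := by
    intro q hq
    have huq_mem : uq q ∈ V q := projOp_mem _ _
    have huq_ne : uq q ≠ 0 := by
      intro h0
      have h7 := hcq_ge q hq
      rw [hcq_apply, h0, inner_zero_right] at h7
      norm_num at h7
    have hle : (ℝ ∙ uq q) ≤ V q := (Submodule.span_singleton_le_iff_mem _ _).2 huq_mem
    have hspan : (ℝ ∙ uq q) = V q :=
      Submodule.eq_of_le_of_finrank_le hle
        (by rw [hVline q (hKrK hq), finrank_span_singleton huq_ne])
    have hepn : e + nu q = (cq q)⁻¹ • uq q := by rw [hnu_apply]; abel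
    rw [← hspan, hepn]
    exact (Submodule.span_singleton_smul_eq
      (isUnit_iff_ne_zero.2 (inv_ne_zero (hcq_pos q hq).ne')) _).symm
  -- ## the Whitney data g, m
  set gg : ℝ → ((V p)ᗮ : Submodule ℝ (EuclideanSpace ℝ (Fin n))) :=
    fun s => Submodule.orthogonalProjectionOnto (V p)ᗮ (Q s) with hggdef
  set mm : ℝ → ((V p)ᗮ : Submodule ℝ (EuclideanSpace ℝ (Fin n))) :=
    fun s => Submodule.orthogonalProjectionOnto (V p)ᗮ (nu (Q s)) with hmmdef
  have hggcoe : ∀ s, (gg s : EuclideanSpace ℝ (Fin n)) = Q s - ⟪e, Q s⟫ • e := by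
    intro s
    show ((Submodule.orthogonalProjectionOnto (V p)ᗮ (Q s) : (V p)ᗮ) : EuclideanSpace ℝ (Fin n)) = _
    rw [← Submodule.starProjection_apply, Submodule.starProjection_orthogonal_val, Submodule.starProjection_apply, ← projOp_coe, hPe]
  have hmmcoe : ∀ s ∈ S, (mm s : EuclideanSpace ℝ (Fin n)) = nu (Q s) := by
    intro s hs
    show ((Submodule.orthogonalProjectionOnto (V p)ᗮ (nu (Q s)) : (V p)ᗮ) : EuclideanSpace ℝ (Fin n)) = _
    rw [← Submodule.starProjection_apply, Submodule.starProjection_eq_self_iff]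
    exact hnu_perp _ (hQS s hs).1
  have hdist2 : ∀ s ∈ S, ∀ t ∈ S, ‖Q t - Q s‖ ≤ 2 * |t - s| := by
    intro s hs t ht
    have h := hnorm2 (Q t) (hQS t ht).1 (Q s) (hQS s hs).1
    rwa [inner_sub_right, (hQS s hs).2, (hQS t ht).2] at h
  -- ## key error estimate
  have hkey : ∀ s ∈ S, ∀ t ∈ S, ∀ ε₁ : ℝ, 0 ≤ ε₁ →
      ‖projOp (Submodule.span ℝ {Q t - Q s}) - projOp (V (Q s))‖ ≤ ε₁ →
      ‖gg t - gg s - (t - s) • mm s‖ ≤ 8 * ε₁ * |t - s| := by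
    intro s hs t ht ε₁ hε₁0 hproj
    have hqKr : Q s ∈ Kr := (hQS s hs).1
    have hq'Kr : Q t ∈ Kr := (hQS t ht).1
    set d := Q t - Q s with hddef
    have hts : ⟪e, d⟫ = t - s := by
      rw [hddef, inner_sub_right, (hQS s hs).2, (hQS t ht).2]
    have hdn : ‖d‖ ≤ 2 * |t - s| := hdist2 s hs t ht
    set y := projOp (V (Q s)) d with hydef
    have hcoe : ((gg t - gg s - (t - s) • mm s : ((V p)ᗮ : Submodule ℝ (EuclideanSpace ℝ (Fin n)))) : EuclideanSpace ℝ (Fin n))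
        = d - (t - s) • e - (t - s) • nu (Q s) := by
      rw [Submodule.coe_sub, Submodule.coe_sub, Submodule.coe_smul, hggcoe, hggcoe,
        hmmcoe s hs, (hQS s hs).2, (hQS t ht).2, hddef]
      module
    have hnormeq : ‖gg t - gg s - (t - s) • mm s‖
        = ‖d - (t - s) • e - (t - s) • nu (Q s)‖ := by
      rw [← hcoe]; rfl
    have hymem : y ∈ V (Q s) := projOp_mem _ _
    rw [hVqspan (Q s) hqKr, Submodule.mem_span_singleton] at hymem
    obtain ⟨a, ha⟩ := hymem
    have hay : ⟪e, y⟫ = a := by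
      rw [← ha, real_inner_smul_right, inner_add_right, hee, hnu_e (Q s) hqKr]; ring
    have hdyinner : ⟪e, d - y⟫ = (t - s) - a := by
      rw [inner_sub_right, hts, hay]
    have hident : d - (t - s) • e - (t - s) • nu (Q s)
        = (d - y) - ⟪e, d - y⟫ • e - ⟪e, d - y⟫ • nu (Q s) := by
      rw [hdyinner, ← ha]
      module
    have hdy : ‖d - y‖ ≤ ε₁ * ‖d‖ := by
      have hdmem : d ∈ Submodule.span ℝ {Q t - Q s} := by
        rw [hddef]; exact Submodule.mem_span_singleton_self _
      calc ‖d - y‖ = ‖d - projOp (V (Q s)) d‖ := by rw [hydef]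
        _ ≤ ‖projOp (Submodule.span ℝ {Q t - Q s}) - projOp (V (Q s))‖ * ‖d‖ :=
            sub_projOp_le hdmem
        _ ≤ ε₁ * ‖d‖ := mul_le_mul_of_nonneg_right hproj (norm_nonneg _)
    have hie : |⟪e, d - y⟫| ≤ ‖d - y‖ := by
      refine (abs_real_inner_le_norm e _).trans ?_
      rw [hene, one_mul]
    rw [hnormeq, hident]
    have hb1 : ‖⟪e, d - y⟫ • e‖ ≤ ‖d - y‖ := by
      rw [norm_smul, Real.norm_eq_abs, hene, mul_one]; exact hie
    have hb2 : ‖⟪e, d - y⟫ • nu (Q s)‖ ≤ ‖d - y‖ * 2 := by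
      rw [norm_smul, Real.norm_eq_abs]
      exact mul_le_mul hie (hnu_norm _ hqKr) (norm_nonneg _) (norm_nonneg _)
    calc ‖(d - y) - ⟪e, d - y⟫ • e - ⟪e, d - y⟫ • nu (Q s)‖
        ≤ ‖(d - y) - ⟪e, d - y⟫ • e‖ + ‖⟪e, d - y⟫ • nu (Q s)‖ := norm_sub_le _ _
      _ ≤ (‖d - y‖ + ‖⟪e, d - y⟫ • e‖) + ‖⟪e, d - y⟫ • nu (Q s)‖ :=
          add_le_add_left (norm_sub_le _ _) _
      _ ≤ 4 * ‖d - y‖ := by linarith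
      _ ≤ 4 * (ε₁ * ‖d‖) := by linarith
      _ ≤ 8 * ε₁ * |t - s| := by nlinarith
  -- ## global Whitney bound with constant 3
  have hCb : ∀ s ∈ S, ∀ t ∈ S, ‖gg t - gg s - (t - s) • mm s‖ ≤ 3 * |t - s| := by
    intro s hs t ht
    have hc1 : ‖gg t - gg s‖ ≤ |t - s| := by
      have hcoe2 : ((gg t - gg s : ((V p)ᗮ : Submodule ℝ (EuclideanSpace ℝ (Fin n)))) : EuclideanSpace ℝ (Fin n))
          = (Q t - Q s) - ⟪e, Q t - Q s⟫ • e := by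
        rw [Submodule.coe_sub, hggcoe, hggcoe, inner_sub_right]
        module
      have heq : ‖gg t - gg s‖ = ‖(Q t - Q s) - ⟪e, Q t - Q s⟫ • e‖ := by
        rw [← hcoe2]; rfl
      rw [heq]
      have h8 := hHL2 (Q t) (hQS t ht).1 (Q s) (hQS s hs).1
      have h9 := hdist2 s hs t ht
      linarith
    have hc2 : ‖mm s‖ ≤ 2 := by
      have heq : ‖mm s‖ = ‖nu (Q s)‖ := by rw [← hmmcoe s hs]; rfl
      rw [heq]
      exact hnu_norm _ (hQS s hs).1
    calc ‖gg t - gg s - (t - s) • mm s‖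
        ≤ ‖gg t - gg s‖ + ‖(t - s) • mm s‖ := norm_sub_le _ _
      _ ≤ |t - s| + |t - s| * 2 := by
          rw [norm_smul, Real.norm_eq_abs]
          exact add_le_add hc1 (mul_le_mul_of_nonneg_left hc2 (abs_nonneg _))
      _ ≤ 3 * |t - s| := by linarith
  -- ## ε–δ Whitney condition
  have hWb : ∀ ε > 0, ∃ δ > 0, ∀ s ∈ S, ∀ t ∈ S, |t - s| ≤ δ →
      ‖gg t - gg s - (t - s) • mm s‖ ≤ ε * |t - s| := by
    intro ε hε
    obtain ⟨δ', hδ'0, hδ'⟩ := secant_unif K V hVcont hsecant Kr hKrcomp hKrK (ε/8)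
      (by positivity)
    refine ⟨δ'/2, by positivity, fun s hs t ht hst => ?_⟩
    rcases eq_or_ne t s with rfl | hts
    · simp
    have hQne : Q s ≠ Q t := by
      intro h
      apply hts
      rw [← (hQS s hs).2, ← (hQS t ht).2, h]
    have hdn' : ‖Q t - Q s‖ ≤ δ' := by
      have := hdist2 s hs t ht
      linarith
    have hproj := hδ' (Q s) (hQS s hs).1 (Q t) (hQS t ht).1 hQne hdn'
    have h10 := hkey s hs t ht (ε/8) (by positivity) hproj
    calc ‖gg t - gg s - (t - s) • mm s‖ ≤ 8 * (ε/8) * |t - s| := h10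
      _ = ε * |t - s| := by ring
  -- ## apply the one-dimensional Whitney extension theorem
  obtain ⟨φ, hφC1, hφval, hφderiv⟩ :=
    Whitney1D.whitney1d hScomp hSne (by norm_num : (0:ℝ) ≤ 3) hCb hWb
  -- ## the graph function
  set ι : (V p) →L[ℝ] ℝ := ((innerSL ℝ e).comp (V p).subtypeL) with hιdef
  have hιapp : ∀ w : (V p), ι w = ⟪e, (w : EuclideanSpace ℝ (Fin n))⟫ := fun _ => rfl
  refine ⟨ball p r, ball_mem_nhds p hr0, fun w => φ (ι w), hφC1.comp ι.contDiff, ?_⟩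
  intro q hq
  have hqKr : q ∈ Kr := ⟨hq.1, ball_subset_closedBall hq.2⟩
  have hsq : ⟪e, q⟫ ∈ S := ⟨q, hqKr, rfl⟩
  have hQq : Q ⟪e, q⟫ = q := hQinv q hqKr
  set v : (V p) := ⟨⟪e, q⟫ • e, Submodule.smul_mem _ _ he⟩ with hvdef
  have hιv : ι v = ⟪e, q⟫ := by
    rw [hιapp]
    show ⟪e, ⟪e, q⟫ • e⟫ = ⟪e, q⟫
    rw [real_inner_smul_right, hee, mul_one]
  refine ⟨v, ?_, ⟨e, he⟩, ?_, ?_⟩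
  · -- graph condition
    have hfv : φ (ι v) = gg ⟪e, q⟫ := by rw [hιv]; exact hφval _ hsq
    show q = ((⟪e, q⟫ • e : EuclideanSpace ℝ (Fin n))) + ((φ (ι v) : EuclideanSpace ℝ (Fin n)))
    rw [hfv, hggcoe, hQq]
    abel
  · -- u ≠ 0
    intro h
    have h11 : e = 0 := congrArg Subtype.val h
    rw [h11, norm_zero] at hene
    norm_num at hene
  · -- tangency
    have hd : HasDerivAt φ (mm ⟪e, q⟫) ⟪e, q⟫ := hφderiv _ hsq
    have h1 : HasFDerivAt φ ((1 : ℝ →L[ℝ] ℝ).smulRight (mm ⟪e, q⟫)) (ι v) := by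
      rw [hιv]; exact hd.hasFDerivAt
    have hcomp : HasFDerivAt (fun w : (V p) => φ (ι w))
        (((1 : ℝ →L[ℝ] ℝ).smulRight (mm ⟪e, q⟫)).comp ι) v :=
      h1.comp v ι.hasFDerivAt
    have happ : (fderiv ℝ (fun w : (V p) => φ (ι w)) v) ⟨e, he⟩ = mm ⟪e, q⟫ := by
      rw [hcomp.fderiv]
      have h12 : ι (⟨e, he⟩ : (V p)) = 1 := by rw [hιapp]; exact hee
      simp [ContinuousLinearMap.comp_apply, h12]
    rw [happ, hmmcoe _ hsq, hQq]
    exact hVqspan q hqKr
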